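/- Suppose x : [0,∞) → ℝ^n is absolutely continuous, y₀ : [0,∞) → ℝ^n is absolutely continuous, and for almost every t ≥ 0 and every i, x_i'(t) = φ_i(t) + b_i sgn(x_i(t) - y_{0,i}(t)) whenever x_i(t) ≠ y_{0,i}(t), where |φ_i(t) - y_{0,i}'(t)| ≤ M and b_i < -M. Then x(t) = y₀(t) for all t ≥ t₀ where t₀ = Σ_i |x_i(0) - y_{0,i}(0)| / (-μ) and μ = max_i (M + b_i) < 0. -/

import Mathlib

open MeasureTheory Set intervalIntegral

lemma decay_nonpos (μ : ℝ) (hμ : μ < 0) (e g : ℝ → ℝ)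
    (hint : ∀ t, 0 ≤ t → IntervalIntegrable g volume 0 t)
    (heq : ∀ t, 0 ≤ t → e t = e 0 + ∫ s in (0:ℝ)..t, g s)
    (hpos : ∀ᵐ t : ℝ, 0 ≤ t → 0 < e t → g t ≤ μ) :
    ∀ t, |e 0| / (-μ) ≤ t → e t ≤ 0 := by
  intro t hTt
  have hT0 : 0 ≤ |e 0| / (-μ) := div_nonneg (abs_nonneg _) (by linarith)
  have ht0 : 0 ≤ t := le_trans hT0 hTt
  by_contra hcon
  push_neg at hcon
  -- main comparison claim
  have claim : ∀ u v : ℝ, 0 ≤ u → u ≤ v → v ≤ t → (∀ s ∈ Set.Ioc u v, 0 < e s) →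
      e v - e u ≤ μ * (v - u) := by
    intro u v hu huv hvt hep
    have hv0 : 0 ≤ v := le_trans hu huv
    have hiu : IntervalIntegrable g volume 0 u := hint u hu
    have hiuv : IntervalIntegrable g volume u v :=
      (hint v hv0).mono_set (by rw [uIcc_of_le huv, uIcc_of_le hv0]; exact Icc_subset_Icc hu le_rfl)
    have hadd : (∫ s in (0:ℝ)..v, g s) = (∫ s in (0:ℝ)..u, g s) + ∫ s in u..v, g s :=
      (integral_add_adjacent_intervals hiu hiuv).symm
    have hEe : e v - e u = ∫ s in u..v, g s := by
      rw [heq v hv0, heq u hu, hadd]; ring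
    have hne : ∀ᵐ s : ℝ ∂volume, s ≠ u := by
      have : (volume : Measure ℝ) {u} = 0 := measure_singleton u
      rw [MeasureTheory.ae_iff]; simpa using this
    have hle : g ≤ᵐ[volume.restrict (Icc u v)] fun _ => μ := by
      filter_upwards [ae_restrict_of_ae hpos, ae_restrict_mem measurableSet_Icc,
        ae_restrict_of_ae hne] with s hs hmem hsne
      exact hs (le_trans hu hmem.1) (hep s ⟨lt_of_le_of_ne hmem.1 (Ne.symm hsne), hmem.2⟩)
    have := integral_mono_ae_restrict huv hiuv (_root_.intervalIntegrable_const (c := μ)) hle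
    rw [intervalIntegral.integral_const] at this
    rw [hEe]
    calc (∫ s in u..v, g s) ≤ (v - u) • μ := this
    _ = μ * (v - u) := by rw [smul_eq_mul]; ring
  -- continuity of e on [0, t]
  have hcont : ContinuousOn e (Icc 0 t) := by
    have h1 : ContinuousOn (fun v => e 0 + ∫ s in (0:ℝ)..v, g s) (Icc 0 t) := by
      have := intervalIntegral.continuousOn_primitive_interval'
        (b₁ := (0:ℝ)) (b₂ := t) (a := (0:ℝ)) (μ := volume) (f := g) (hint t ht0)
        (by rw [uIcc_of_le ht0]; exact left_mem_Icc.2 ht0)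
      rw [uIcc_of_le ht0] at this
      exact continuousOn_const.add this
    exact h1.congr (fun v hv => heq v hv.1)
  set S : Set ℝ := {v ∈ Icc 0 t | e v ≤ 0} with hS
  by_cases hSne : S.Nonempty
  · -- last time e ≤ 0
    have hSc : IsClosed S := by
      have : S = Icc 0 t ∩ e ⁻¹' (Iic 0) := by ext v; simp [hS]
      rw [this]
      exact hcont.preimage_isClosed_of_isClosed isClosed_Icc isClosed_Iic
    have hSbdd : BddAbove S := ⟨t, fun v hv => hv.1.2⟩
    obtain ⟨u, huS, hmax⟩ : ∃ u ∈ S, ∀ v ∈ S, v ≤ u :=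
      ⟨sSup S, hSc.csSup_mem hSne hSbdd, fun v hv => le_csSup hSbdd hv⟩
    have hut : u ≤ t := huS.1.2
    have hu0 : 0 ≤ u := huS.1.1
    have hult : u < t := lt_of_le_of_ne hut (by intro h; rw [h] at huS; linarith [huS.2])
    have hep : ∀ s ∈ Set.Ioc u t, 0 < e s := by
      intro s hs
      by_contra hc
      push_neg at hc
      have : s ∈ S := ⟨⟨le_trans hu0 hs.1.le, hs.2⟩, hc⟩
      exact absurd (hmax s this) (not_le.2 hs.1)
    have := claim u t hu0 hut le_rfl hep
    nlinarith [huS.2]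
  · -- e > 0 on all of [0, t]
    push_neg at hSne
    have hep : ∀ s ∈ Icc 0 t, 0 < e s := by
      intro s hs
      by_contra hc
      push_neg at hc
      have : s ∈ S := ⟨hs, hc⟩
      simp [hSne] at this
    have h0 : 0 < e 0 := hep 0 (left_mem_Icc.2 ht0)
    have habs : |e 0| = e 0 := abs_of_pos h0
    have hmono := claim 0 t le_rfl ht0 le_rfl (fun s hs => hep s ⟨hs.1.le, hs.2⟩)
    rw [habs] at hTt
    rw [div_le_iff₀ (by linarith : (0:ℝ) < -μ)] at hTt
    nlinarith



/-- static discontinuous feedback synchronization.  The slave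
trajectory x (absolutely continuous, encoded by the FTC representation with
density xd) satisfies, wherever the error component is nonzero,
xᵢ' = φᵢ(t) + bᵢ sgn(xᵢ - y₀ᵢ) with |φᵢ(t) - y₀ᵢ'(t)| ≤ M and bᵢ < -M.  Then x
coincides with y₀ after the finite time t₀ = Σᵢ|xᵢ(0) - y₀ᵢ(0)|/(-μ),
μ = maxᵢ (M + bᵢ). -/
theorem stmt10 (n : ℕ) [NeZero n] (M : ℝ) (hM : 0 < M) (b : Fin n → ℝ)
    (hb : ∀ i : Fin n, b i < -M)
    (φ : Fin n → ℝ → ℝ) (hφ : ∀ i : Fin n, Measurable (φ i))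
    (x y₀ xd yd : ℝ → Fin n → ℝ)
    (hxint : ∀ (i : Fin n) (t : ℝ), 0 ≤ t →
      IntervalIntegrable (fun s => xd s i) MeasureTheory.volume 0 t ∧
      x t i = x 0 i + ∫ s in (0:ℝ)..t, xd s i)
    (hyint : ∀ (i : Fin n) (t : ℝ), 0 ≤ t →
      IntervalIntegrable (fun s => yd s i) MeasureTheory.volume 0 t ∧
      y₀ t i = y₀ 0 i + ∫ s in (0:ℝ)..t, yd s i)
    (hode : ∀ᵐ t : ℝ, 0 ≤ t → ∀ i : Fin n, x t i ≠ y₀ t i →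
      xd t i = φ i t + b i * Real.sign (x t i - y₀ t i))
    (hbound : ∀ᵐ t : ℝ, 0 ≤ t → ∀ i : Fin n, |φ i t - yd t i| ≤ M)
    (μ : ℝ)
    (hμ : μ = Finset.univ.sup' Finset.univ_nonempty (fun i : Fin n => M + b i)) :
    ∀ t : ℝ, (∑ i, |x 0 i - y₀ 0 i|) / (-μ) ≤ t → x t = y₀ t := by
  intro t ht
  have hμneg : μ < 0 := by
    rw [hμ]
    exact (Finset.sup'_lt_iff _).mpr (fun i _ => by linarith [hb i])
  funext i
  have hμi : M + b i ≤ μ := hμ ▸ Finset.le_sup' (fun j => M + b j) (Finset.mem_univ i)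
  have habs : |x 0 i - y₀ 0 i| ≤ ∑ j, |x 0 j - y₀ 0 j| :=
    Finset.single_le_sum (f := fun j => |x 0 j - y₀ 0 j|) (fun j _ => abs_nonneg _) (Finset.mem_univ i)
  have hTt : |x 0 i - y₀ 0 i| / (-μ) ≤ t :=
    le_trans (by apply div_le_div_of_nonneg_right habs; linarith) ht
  have hint : ∀ u, 0 ≤ u →
      IntervalIntegrable (fun s => xd s i - yd s i) MeasureTheory.volume 0 u :=
    fun u hu => (hxint i u hu).1.sub (hyint i u hu).1
  have heq : ∀ u, 0 ≤ u → x u i - y₀ u i = (x 0 i - y₀ 0 i) +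
      ∫ s in (0:ℝ)..u, (xd s i - yd s i) := by
    intro u hu
    rw [(hxint i u hu).2, (hyint i u hu).2,
      intervalIntegral.integral_sub (hxint i u hu).1 (hyint i u hu).1]
    ring
  have h1 : x t i - y₀ t i ≤ 0 := by
    refine decay_nonpos μ hμneg (fun s => x s i - y₀ s i) (fun s => xd s i - yd s i)
      hint heq ?_ t hTt
    filter_upwards [hode, hbound] with s hs hbs hs0 hes
    have hsign := hs hs0 i (by intro h; rw [h] at hes; simp at hes)
    rw [Real.sign_of_pos hes] at hsign
    have := hbs hs0 i
    rw [abs_le] at this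
    simp only [hsign]
    linarith [this.2]
  have h2 : y₀ t i - x t i ≤ 0 := by
    refine decay_nonpos μ hμneg (fun s => y₀ s i - x s i) (fun s => yd s i - xd s i)
      (fun u hu => (hyint i u hu).1.sub (hxint i u hu).1) ?_ ?_ t ?_
    · intro u hu
      have := heq u hu
      rw [intervalIntegral.integral_sub (hyint i u hu).1 (hxint i u hu).1]
      rw [intervalIntegral.integral_sub (hxint i u hu).1 (hyint i u hu).1] at this
      linarith
    · filter_upwards [hode, hbound] with s hs hbs hs0 hes
      have hsign := hs hs0 i (by intro h; rw [h] at hes; simp at hes)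
      rw [Real.sign_of_neg (by linarith : x s i - y₀ s i < 0)] at hsign
      have := hbs hs0 i
      rw [abs_le] at this
      simp only [hsign]
      linarith [this.1]
    · rwa [abs_sub_comm]
  linarith
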